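/- Let R be a finite set of positive integers with min(R) = m ≥ 2 and max(R) = M, and let G be a fixed graph. Then for every positive integer n, êx_R(n,G) ≤ (C(M,2)/C(m,2)) · êx_m(n,G), where C(a,2) = a(a−1)/2 denotes the binomial coefficient. -/

import Mathlib

/-- A hypergraph `H` (given by its finite collection of hyperedges on vertex type `β`)
contains a Berge copy of the graph `G`: there is an injection of the vertices of `G`
and an injection of the edges of `G` into hyperedges of `H` such that each edge of `G`
is contained in its corresponding hyperedge. -/
def HasBergeCopy {α β : Type*} [DecidableEq β] (G : SimpleGraph α)
    (H : Finset (Finset β)) : Prop :=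
  ∃ (i : α → β) (f : Sym2 α → Finset β),
    Function.Injective i ∧ Set.InjOn f G.edgeSet ∧
    (∀ e ∈ G.edgeSet, f e ∈ H) ∧
    (∀ u v, G.Adj u v → i u ∈ f s(u, v) ∧ i v ∈ f s(u, v))

/-- The edge set of the shadow graph of a hypergraph `H`: all 2-element subsets of
vertices covered by some hyperedge of `H`. -/
def covPairs {β : Type*} [DecidableEq β] (H : Finset (Finset β)) : Finset (Finset β) :=
  H.biUnion fun h => Finset.powersetCard 2 h

/-- The `R`-cover Turán number `êx_R(n, G)`: the maximum number of edges in the shadow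
of a Berge-`G`-free `R`-graph on `n` vertices. -/
noncomputable def coverTuranNumber {α : Type*} (R : Set ℕ) (n : ℕ)
    (G : SimpleGraph α) : ℕ :=
  sSup { m | ∃ H : Finset (Finset (Fin n)),
    (∀ h ∈ H, h.card ∈ R) ∧ ¬ HasBergeCopy G H ∧ m = (covPairs H).card }

open Finset

lemma berge_image {α β : Type*} [DecidableEq β] (G : SimpleGraph α)
    (H : Finset (Finset β)) (σ : Finset β → Finset β)
    (hσ : ∀ h ∈ H, σ h ⊆ h) (hfree : ¬ HasBergeCopy G H) :
    ¬ HasBergeCopy G (H.image σ) := by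
  classical
  rintro ⟨i, f, hi, hinj, hmem, hcov⟩
  set g : Finset β → Finset β := fun s => if hs : ∃ h ∈ H, σ h = s then hs.choose else ∅ with hg
  have key : ∀ s ∈ H.image σ, g s ∈ H ∧ σ (g s) = s := by
    intro s hs
    rw [mem_image] at hs
    obtain ⟨h, hh, rfl⟩ := hs
    have hex : ∃ h' ∈ H, σ h' = σ h := ⟨h, hh, rfl⟩
    simp only [hg, dif_pos hex]
    exact hex.choose_spec
  refine hfree ⟨i, g ∘ f, hi, ?_, ?_, ?_⟩
  · intro e1 he1 e2 he2 heq
    have h1 := (key _ (hmem e1 he1)).2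
    have h2 := (key _ (hmem e2 he2)).2
    apply hinj he1 he2
    rw [← h1, ← h2]
    exact congrArg σ heq
  · intro e he
    exact (key _ (hmem e he)).1
  · intro u v huv
    have he : s(u,v) ∈ G.edgeSet := huv
    have hk := key _ (hmem _ he)
    have hsub : f s(u,v) ⊆ g (f s(u,v)) := by
      conv_lhs => rw [← hk.2]
      exact hσ _ hk.1
    exact ⟨hsub (hcov u v huv).1, hsub (hcov u v huv).2⟩

lemma count_filter_subset {β : Type*} [DecidableEq β] (h p : Finset β) (m' : ℕ)
    (hp : p ⊆ h) (hpm : p.card ≤ m') :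
    ((h.powersetCard m').filter (fun s => p ⊆ s)).card
      = (h.card - p.card).choose (m' - p.card) := by
  classical
  rw [← card_sdiff_of_subset hp, ← card_powersetCard (m' - p.card) (h \ p)]
  apply card_bij' (fun s _ => s \ p) (fun t _ => t ∪ p)
  · intro s hs
    simp only [mem_filter, mem_powersetCard] at hs
    obtain ⟨⟨hsh, hsc⟩, hps⟩ := hs
    rw [mem_powersetCard]
    constructor
    · exact sdiff_subset_sdiff hsh (le_refl p)
    · rw [card_sdiff_of_subset hps, hsc]
  · intro t ht
    rw [mem_powersetCard] at ht
    obtain ⟨hth, htc⟩ := ht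
    have hdisj : Disjoint t p := disjoint_of_subset_left hth sdiff_disjoint
    simp only [mem_filter, mem_powersetCard]
    refine ⟨⟨union_subset (hth.trans sdiff_subset) hp, ?_⟩, subset_union_right⟩
    rw [card_union_of_disjoint hdisj, htc]
    omega
  · intro s hs
    simp only [mem_filter, mem_powersetCard] at hs
    exact sdiff_union_of_subset hs.2
  · intro t ht
    rw [mem_powersetCard] at ht
    exact union_sdiff_cancel_right (disjoint_of_subset_left ht.1 sdiff_disjoint)

lemma sum_pairs_count {β : Type*} [DecidableEq β] (h : Finset β) (D : Finset (Finset β))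
    (hD : D ⊆ h.powersetCard 2) (m' : ℕ) (hm' : 2 ≤ m') :
    ∑ s ∈ h.powersetCard m', ((s.powersetCard 2) ∩ D).card
      = D.card * (h.card - 2).choose (m' - 2) := by
  classical
  have hrw : ∀ s ∈ h.powersetCard m', ((s.powersetCard 2) ∩ D).card
      = (D.filter (fun p => p ⊆ s)).card := by
    intro s _
    congr 1
    ext p
    simp only [mem_inter, mem_filter, mem_powersetCard]
    constructor
    · rintro ⟨⟨hps, _⟩, hpD⟩; exact ⟨hpD, hps⟩
    · rintro ⟨hpD, hps⟩
      have := mem_powersetCard.1 (hD hpD)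
      exact ⟨⟨hps, this.2⟩, hpD⟩
  rw [Finset.sum_congr rfl hrw]
  simp_rw [card_filter]
  rw [Finset.sum_comm]
  have : ∀ p ∈ D, (∑ s ∈ h.powersetCard m', if p ⊆ s then 1 else 0)
      = (h.card - 2).choose (m' - 2) := by
    intro p hp
    have hmem := mem_powersetCard.1 (hD hp)
    rw [← Finset.sum_filter, Finset.sum_const, smul_eq_mul, mul_one]
    rw [← hmem.2] at hm' ⊢
    exact count_filter_subset h p m' hmem.1 hm'
  rw [Finset.sum_congr rfl this, Finset.sum_const, smul_eq_mul]

lemma exists_good_subset {β : Type*} [DecidableEq β] (h : Finset β) (D : Finset (Finset β))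
    (hD : D ⊆ h.powersetCard 2) (m M : ℕ) (hm2 : 2 ≤ m) (hmh : m ≤ h.card)
    (hhM : h.card ≤ M) :
    ∃ s ∈ h.powersetCard m,
      m.choose 2 * D.card ≤ M.choose 2 * ((s.powersetCard 2) ∩ D).card := by
  classical
  have hne : (h.powersetCard m).Nonempty := powersetCard_nonempty.2 hmh
  have hsum : (∑ s ∈ h.powersetCard m, m.choose 2 * D.card)
      = ∑ s ∈ h.powersetCard m, h.card.choose 2 * ((s.powersetCard 2) ∩ D).card := by
    rw [Finset.sum_const, ← Finset.mul_sum, sum_pairs_count h D hD m hm2,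
      card_powersetCard, smul_eq_mul]
    have hid : h.card.choose m * m.choose 2 = h.card.choose 2 * (h.card - 2).choose (m - 2) :=
      Nat.choose_mul hm2
    calc h.card.choose m * (m.choose 2 * D.card)
        = h.card.choose m * m.choose 2 * D.card := by ring
      _ = h.card.choose 2 * (h.card - 2).choose (m - 2) * D.card := by rw [hid]
      _ = h.card.choose 2 * (D.card * (h.card - 2).choose (m - 2)) := by ring
  obtain ⟨s, hs, hle⟩ := Finset.exists_le_of_sum_le hne hsum.le
  exact ⟨s, hs, hle.trans (Nat.mul_le_mul_right _ (Nat.choose_le_choose 2 hhM))⟩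

lemma covPairs_subset_of_refine {β : Type*} [DecidableEq β]
    {T' T : Finset (Finset β)} (hT : ∀ s ∈ T', ∃ h ∈ T, s ⊆ h) :
    covPairs T' ⊆ covPairs T := by
  intro p hp
  rw [covPairs, mem_biUnion] at hp ⊢
  obtain ⟨s, hs, hps⟩ := hp
  obtain ⟨h, hh, hsh⟩ := hT s hs
  exact ⟨h, hh, powersetCard_mono hsh hps⟩

lemma select_lemma {β : Type*} [DecidableEq β] (m M : ℕ) (hm2 : 2 ≤ m) :
    ∀ H : Finset (Finset β), (∀ h ∈ H, m ≤ h.card ∧ h.card ≤ M) →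
    ∃ σ : Finset β → Finset β, (∀ h ∈ H, σ h ⊆ h ∧ (σ h).card = m) ∧
      m.choose 2 * (covPairs H).card ≤ M.choose 2 * (covPairs (H.image σ)).card := by
  classical
  intro H
  induction H using Finset.induction_on with
  | empty => intro _; exact ⟨id, by simp, by simp [covPairs]⟩
  | @insert h H₀ hh IH =>
    intro hcards
    obtain ⟨σ₀, hσ₀, hcount₀⟩ := IH (fun x hx => hcards x (mem_insert_of_mem hx))
    obtain ⟨hmh, hhM⟩ := hcards h (mem_insert_self h H₀)
    set P := covPairs H₀ with hP
    set A := covPairs (H₀.image σ₀) with hA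
    set D := h.powersetCard 2 \ P with hD
    obtain ⟨s, hs, hsle⟩ := exists_good_subset h D (sdiff_subset) m M hm2 hmh hhM
    rw [mem_powersetCard] at hs
    refine ⟨fun x => if x = h then s else σ₀ x, ?_, ?_⟩
    · intro x hx
      rcases mem_insert.1 hx with rfl | hx0
      · simp [hs.1, hs.2]
      · have hxh : x ≠ h := fun h' => hh (h' ▸ hx0)
        simpa [hxh] using hσ₀ x hx0
    · have himg : (insert h H₀).image (fun x => if x = h then s else σ₀ x)
          = insert s (H₀.image σ₀) := by
        rw [image_insert, if_pos rfl]
        congr 1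
        apply image_congr
        intro x hx
        have hxh : x ≠ h := fun h' => hh (h' ▸ hx)
        simp [hxh]
      rw [himg]
      have hAP : A ⊆ P := by
        apply covPairs_subset_of_refine
        intro t ht
        rw [mem_image] at ht
        obtain ⟨x, hx, rfl⟩ := ht
        exact ⟨x, hx, (hσ₀ x hx).1⟩
      have hins : covPairs (insert h H₀) = h.powersetCard 2 ∪ P := by
        rw [covPairs, biUnion_insert]; rfl
      have hins' : covPairs (insert s (H₀.image σ₀)) = s.powersetCard 2 ∪ A := by
        rw [covPairs, biUnion_insert]; rfl
      have hc1 : (covPairs (insert h H₀)).card = D.card + P.card := by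
        rw [hins, ← card_sdiff_add_card]
      have hc2 : ((s.powersetCard 2) ∩ D).card + A.card
          ≤ (covPairs (insert s (H₀.image σ₀))).card := by
        rw [hins', ← card_sdiff_add_card]
        apply Nat.add_le_add_right
        apply card_le_card
        intro p hp
        rw [mem_inter] at hp
        rw [mem_sdiff]
        exact ⟨hp.1, fun hpA => (mem_sdiff.1 hp.2).2 (hAP hpA)⟩
      calc m.choose 2 * (covPairs (insert h H₀)).card
          = m.choose 2 * D.card + m.choose 2 * P.card := by rw [hc1, Nat.mul_add]
        _ ≤ M.choose 2 * ((s.powersetCard 2) ∩ D).card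
              + M.choose 2 * (covPairs (H₀.image σ₀)).card :=
            Nat.add_le_add hsle hcount₀
        _ = M.choose 2 * (((s.powersetCard 2) ∩ D).card + A.card) := by
            rw [Nat.mul_add]
        _ ≤ M.choose 2 * (covPairs (insert s (H₀.image σ₀))).card :=
            Nat.mul_le_mul_left _ hc2

theorem stmt1 {α : Type*} [Fintype α] (G : SimpleGraph α)
    (R : Finset ℕ) (hR : R.Nonempty) (m M : ℕ)
    (hm : R.min' hR = m) (hM : R.max' hR = M) (hm2 : 2 ≤ m) :
    ∀ n : ℕ, 0 < n →
      (coverTuranNumber (↑R : Set ℕ) n G : ℝ) ≤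
        ((M.choose 2 : ℝ) / (m.choose 2 : ℝ)) * (coverTuranNumber {m} n G : ℝ) := by
  classical
  intro n _
  set SR := { v | ∃ H : Finset (Finset (Fin n)),
    (∀ h ∈ H, h.card ∈ (↑R : Set ℕ)) ∧ ¬ HasBergeCopy G H ∧ v = (covPairs H).card } with hSR
  set Sm := { v | ∃ H : Finset (Finset (Fin n)),
    (∀ h ∈ H, h.card ∈ ({m} : Set ℕ)) ∧ ¬ HasBergeCopy G H ∧ v = (covPairs H).card } with hSm
  have hbdd : ∀ S : Set ℕ, (∀ v ∈ S, ∃ H : Finset (Finset (Fin n)), v = (covPairs H).card)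
      → BddAbove S := by
    intro S hS
    refine ⟨((univ : Finset (Fin n)).powersetCard 2).card, fun v hv => ?_⟩
    obtain ⟨H, rfl⟩ := hS v hv
    apply card_le_card
    intro p hp
    rw [covPairs, mem_biUnion] at hp
    obtain ⟨h, _, hph⟩ := hp
    exact powersetCard_mono (subset_univ h) hph
  have hbddR : BddAbove SR := hbdd SR (fun v ⟨H, _, _, hv⟩ => ⟨H, hv⟩)
  have hbddm : BddAbove Sm := hbdd Sm (fun v ⟨H, _, _, hv⟩ => ⟨H, hv⟩)
  have hm2pos : (0:ℝ) < (m.choose 2 : ℝ) := by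
    have : 0 < m.choose 2 := Nat.choose_pos hm2
    exact_mod_cast this
  have key : ∀ v ∈ SR, m.choose 2 * v ≤ M.choose 2 * coverTuranNumber {m} n G := by
    rintro v ⟨H, hHcard, hHfree, rfl⟩
    have hcards : ∀ h ∈ H, m ≤ h.card ∧ h.card ≤ M := by
      intro h hh
      have := hHcard h hh
      exact ⟨hm ▸ R.min'_le _ this, hM ▸ R.le_max' _ this⟩
    obtain ⟨σ, hσ, hcount⟩ := select_lemma m M hm2 H hcards
    have hmem : (covPairs (H.image σ)).card ∈ Sm := by
      refine ⟨H.image σ, ?_, berge_image G H σ (fun h hh => (hσ h hh).1) hHfree, rfl⟩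
      intro h' hh'
      rw [mem_image] at hh'
      obtain ⟨h, hh, rfl⟩ := hh'
      exact (hσ h hh).2
    have := le_csSup hbddm hmem
    exact hcount.trans (Nat.mul_le_mul_left _ this)
  rw [coverTuranNumber, ← hSR]
  rcases Set.eq_empty_or_nonempty SR with hemp | hne
  · rw [hemp, csSup_empty]
    simp only [Nat.bot_eq_zero, Nat.cast_zero]
    positivity
  · have hmem := Nat.sSup_mem hne hbddR
    have hkey := key _ hmem
    rw [div_mul_eq_mul_div, le_div_iff₀ hm2pos, mul_comm]
    have hcast := (Nat.cast_le (α := ℝ)).2 hkey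
    push_cast at hcast
    exact hcast
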